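/- Let $H$ be a $(k-s)$-dimensional affine subspace of $\mathbb{F}_q^k$ not passing through the origin. Then the number $n_q(k,s)$ of $s$-dimensional vector subspaces of $\mathbb{F}_q^k$ that are disjoint from $H$ equals $\sum_{i=1}^{s} q^{(s-i)(k-i-s+1)}\binom{s-1}{i-1}_q \binom{k-s}{i}_q$. -/

import Mathlib

/-- The Gaussian (q-binomial) coefficient, as a rational number (equal to `0` if `s > k`). -/
noncomputable def qbin (q k s : ℕ) : ℚ :=
  (∏ i ∈ Finset.range s, ((q : ℚ) ^ (k - i) - 1)) /
    (∏ i ∈ Finset.range s, ((q : ℚ) ^ (s - i) - 1))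

section Rational

noncomputable def qfact (q n : ℕ) : ℚ := ∏ j ∈ Finset.range n, ((q : ℚ) ^ (j + 1) - 1)

variable {q : ℕ}

lemma qfact_ne_zero (hq : 2 ≤ q) (n : ℕ) : qfact q n ≠ 0 := by
  rw [qfact, Finset.prod_ne_zero_iff]
  intro j _
  have h1 : (1 : ℚ) < (q : ℚ) ^ (j + 1) :=
    one_lt_pow₀ (by exact_mod_cast hq) (Nat.succ_ne_zero j)
  exact sub_ne_zero.2 (ne_of_gt h1)

lemma qfact_succ (n : ℕ) : qfact q (n + 1) = qfact q n * ((q : ℚ) ^ (n + 1) - 1) :=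
  Finset.prod_range_succ _ _

lemma prodA (n m : ℕ) (h : m ≤ n) :
    (∏ j ∈ Finset.range m, ((q : ℚ) ^ (n - j) - 1)) * qfact q (n - m) = qfact q n := by
  induction m generalizing n with
  | zero => simp
  | succ m ih =>
    obtain ⟨n', rfl⟩ : ∃ n', n = n' + 1 := ⟨n - 1, by omega⟩
    rw [Finset.prod_range_succ']
    have hcongr : ∀ j ∈ Finset.range m, ((q : ℚ) ^ (n' + 1 - (j + 1)) - 1) =
        ((q : ℚ) ^ (n' - j) - 1) := by
      intro j _; congr 2; omega
    rw [Finset.prod_congr rfl hcongr]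
    have hsub : n' + 1 - (m + 1) = n' - m := by omega
    have hsub0 : n' + 1 - 0 = n' + 1 := rfl
    rw [hsub, hsub0, mul_comm (∏ j ∈ Finset.range m, ((q:ℚ) ^ (n' - j) - 1)) _, mul_assoc,
      ih n' (by omega), qfact_succ, mul_comm]

lemma qbin_eq_qfact (hq : 2 ≤ q) {n m : ℕ} (h : m ≤ n) :
    qbin q n m = qfact q n / (qfact q m * qfact q (n - m)) := by
  have h1 : (∏ j ∈ Finset.range m, ((q : ℚ) ^ (n - j) - 1)) =
      qfact q n / qfact q (n - m) := by
    rw [eq_div_iff (qfact_ne_zero hq _), prodA n m h]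
  have h2 : (∏ j ∈ Finset.range m, ((q : ℚ) ^ (m - j) - 1)) = qfact q m := by
    have := prodA (q := q) m m le_rfl
    simpa [qfact] using this
  rw [qbin, h1, h2, div_div, mul_comm (qfact q (n-m))]

lemma qbin_symm (hq : 2 ≤ q) {n m : ℕ} (h : m ≤ n) : qbin q n m = qbin q n (n - m) := by
  rw [qbin_eq_qfact hq h, qbin_eq_qfact hq (Nat.sub_le n m), Nat.sub_sub_self h, mul_comm]

lemma qbin_zero_of_lt {n m : ℕ} (h : n < m) : qbin q n m = 0 := by
  rw [qbin]
  have : (∏ i ∈ Finset.range m, ((q : ℚ) ^ (n - i) - 1)) = 0 := by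
    apply Finset.prod_eq_zero (Finset.mem_range.2 h)
    simp [Nat.sub_self]
  rw [this, zero_div]

lemma prod_sub_pow (a m : ℕ) (h : m ≤ a) :
    ∏ j ∈ Finset.range m, ((q : ℚ) ^ a - (q : ℚ) ^ j) =
      (∏ j ∈ Finset.range m, (q : ℚ) ^ j) *
        ∏ j ∈ Finset.range m, ((q : ℚ) ^ (a - j) - 1) := by
  rw [← Finset.prod_mul_distrib]
  apply Finset.prod_congr rfl
  intro j hj
  have hja : j ≤ a := le_trans (Nat.le_of_lt_succ (Nat.lt_succ_of_lt (Finset.mem_range.1 hj))) h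
  rw [mul_sub, mul_one, ← pow_add]
  congr 2
  omega

lemma qb'_eq_qbin (hq : 2 ≤ q) (n m : ℕ) :
    (∏ j ∈ Finset.range m, ((q : ℚ) ^ n - (q : ℚ) ^ j)) /
      (∏ j ∈ Finset.range m, ((q : ℚ) ^ m - (q : ℚ) ^ j)) = qbin q n m := by
  by_cases h : m ≤ n
  · rw [prod_sub_pow n m h, prod_sub_pow m m le_rfl, qbin]
    have hE : (∏ j ∈ Finset.range m, (q : ℚ) ^ j) ≠ 0 := by
      apply Finset.prod_ne_zero_iff.2
      intro j _
      exact pow_ne_zero _ (by positivity <;> omega)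
    rw [mul_div_mul_left _ _ hE]
  · push_neg at h
    have h0 : (∏ j ∈ Finset.range m, ((q : ℚ) ^ n - (q : ℚ) ^ j)) = 0 := by
      apply Finset.prod_eq_zero (Finset.mem_range.2 h)
      ring
    rw [h0, zero_div, qbin_zero_of_lt h]

lemma cast_prod_fin (hq : 1 ≤ q) (a m : ℕ) (h : m ≤ a + 1) :
    ((∏ i : Fin m, (q ^ a - q ^ (i : ℕ)) : ℕ) : ℚ) =
      ∏ j ∈ Finset.range m, ((q : ℚ) ^ a - (q : ℚ) ^ j) := by
  rw [Fin.prod_univ_eq_prod_range (fun i => q ^ a - q ^ i) m, Nat.cast_prod]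
  apply Finset.prod_congr rfl
  intro j hj
  have hja : j ≤ a := by have := Finset.mem_range.1 hj; omega
  have hle : q ^ j ≤ q ^ a := Nat.pow_le_pow_right hq hja
  push_cast [Nat.cast_sub hle]
  ring

lemma A_ne_zero (hq : 2 ≤ q) (m : ℕ) :
    (∏ j ∈ Finset.range m, ((q : ℚ) ^ m - (q : ℚ) ^ j)) ≠ 0 := by
  apply Finset.prod_ne_zero_iff.2
  intro j hj
  have : (q : ℚ) ^ j < (q : ℚ) ^ m :=
    pow_lt_pow_right₀ (by exact_mod_cast hq) (Finset.mem_range.1 hj)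
  exact sub_ne_zero.2 (ne_of_gt this)

end Rational

open Module Submodule

section Counting

variable {F : Type*} [Field F] [Fintype F] {M : Type*} [AddCommGroup M] [Module F M]
  [FiniteDimensional F M]

local notation "q" => Fintype.card F

set_option linter.unusedSectionVars false

lemma li_mkQ_iff (C : Submodule F M) {m : ℕ} {v : Fin m → M} :
    LinearIndependent F (C.mkQ ∘ v) ↔
      LinearIndependent F v ∧ span F (Set.range v) ⊓ C = ⊥ := by
  constructor
  · intro h
    refine ⟨h.of_comp _, ?_⟩
    have := Submodule.range_ker_disjoint h
    rwa [Submodule.ker_mkQ, disjoint_iff] at this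
  · rintro ⟨h1, h2⟩
    exact h1.map (by rw [Submodule.ker_mkQ]; exact disjoint_iff.2 h2)

lemma card_tuples (C : Submodule F M) (m : ℕ) :
    Nat.card {v : Fin m → M // LinearIndependent F (C.mkQ ∘ v)} =
      Nat.card {U : Submodule F M // finrank F U = m ∧ U ⊓ C = ⊥} *
        ∏ i : Fin m, (q ^ m - q ^ (i : ℕ)) := by
  classical
  haveI : Finite M := Module.finite_of_finite F
  haveI : Finite (Submodule F M) :=
    Finite.of_injective (fun U : Submodule F M => (U : Set M)) fun U V h => SetLike.ext' h
  -- the map from the sigma type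
  set B := {U : Submodule F M // finrank F U = m ∧ U ⊓ C = ⊥} with hB
  have span_eq : ∀ (U : B) (w : Fin m → U.1), LinearIndependent F w →
      span F (Set.range fun i => ((w i : M))) = U.1 := by
    intro U w hw
    have h1 : span F (Set.range w) = ⊤ := by
      apply Submodule.eq_top_of_finrank_eq
      rw [finrank_span_eq_card hw, Fintype.card_fin, U.2.1]
    have : (Set.range fun i => ((w i : M))) = U.1.subtype '' (Set.range w) := by
      ext y; simp [Set.range_comp]
    rw [this, ← Submodule.map_span, h1, Submodule.map_subtype_top]
  have key : ∀ (U : B) (w : Fin m → U.1), LinearIndependent F w →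
      LinearIndependent F (C.mkQ ∘ fun i => ((w i : M))) := by
    intro U w hw
    rw [li_mkQ_iff]
    constructor
    · exact hw.map' U.1.subtype (Submodule.ker_subtype _)
    · rw [span_eq U w hw]
      exact U.2.2
  let Ψ : (Σ U : B, {w : Fin m → U.1 // LinearIndependent F w}) →
      {v : Fin m → M // LinearIndependent F (C.mkQ ∘ v)} :=
    fun p => ⟨fun i => (p.2.1 i : M), key p.1 p.2.1 p.2.2⟩
  have hbij : Function.Bijective Ψ := by
    constructor
    · rintro ⟨U, w, hw⟩ ⟨U', w', hw'⟩ h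
      have hv : (fun i => ((w i : M))) = fun i => ((w' i : M)) := congrArg Subtype.val h
      have hU : U = U' := by
        apply Subtype.ext
        rw [← span_eq ⟨U.1, U.2⟩ w hw, ← span_eq ⟨U'.1, U'.2⟩ w' hw']
        simp only [hv]
      subst hU
      have : w = w' := by
        funext i
        exact Subtype.ext (congrFun hv i)
      simp [this]
    · rintro ⟨v, hv⟩
      rw [li_mkQ_iff] at hv
      obtain ⟨h1, h2⟩ := hv
      refine ⟨⟨⟨span F (Set.range v), ?_, h2⟩,
        ⟨fun i => ⟨v i, Submodule.subset_span (Set.mem_range_self i)⟩, ?_⟩⟩, rfl⟩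
      · rw [finrank_span_eq_card h1, Fintype.card_fin]
      · exact (by exact h1 : LinearIndependent F
          ((span F (Set.range v)).subtype ∘ fun i => ⟨v i, _⟩)).of_comp _
  rw [← Nat.card_congr (Equiv.ofBijective Ψ hbij)]
  haveI : Fintype B := Fintype.ofFinite B
  haveI : ∀ U : B, Fintype {w : Fin m → U.1 // LinearIndependent F w} :=
    fun U => Fintype.ofFinite _
  rw [Nat.card_eq_fintype_card, Fintype.card_sigma]
  have hcard : ∀ U : B, Fintype.card {w : Fin m → U.1 // LinearIndependent F w} =
      ∏ i : Fin m, (q ^ m - q ^ (i : ℕ)) := by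
    intro U
    rw [← Nat.card_eq_fintype_card]
    have := card_linearIndependent (K := F) (V := U.1) (k := m) (by rw [U.2.1])
    rwa [U.2.1] at this
  simp only [hcard, Finset.sum_const, Finset.card_univ, smul_eq_mul]
  rw [Nat.card_eq_fintype_card]

lemma card_lifts (C : Submodule F M) (m : ℕ) :
    Nat.card {v : Fin m → M // LinearIndependent F (C.mkQ ∘ v)} =
      (q ^ finrank F C) ^ m *
        Nat.card {w : Fin m → (M ⧸ C) // LinearIndependent F w} := by
  classical
  haveI : Finite M := Module.finite_of_finite F
  obtain ⟨g, hg⟩ := C.mkQ.exists_rightInverse_of_surjective C.range_mkQ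
  have hg' : ∀ y, C.mkQ (g y) = y := fun y => congrArg (fun f => f y) (congrArg DFunLike.coe hg)
  have hzero : ∀ c : C, C.mkQ (c : M) = 0 := fun c => by
    simpa using (Submodule.Quotient.mk_eq_zero C).2 c.2
  have hmem : ∀ y : M, C.mkQ y = 0 → y ∈ C := fun y hy =>
    C.ker_mkQ ▸ LinearMap.mem_ker.2 hy
  have h1 : ∀ (w : Fin m → M ⧸ C) (d : Fin m → C) (i : Fin m),
      C.mkQ (g (w i) + (d i : M)) = w i := by
    intro w d i
    rw [map_add, hg', hzero, add_zero]
  let e : {v : Fin m → M // LinearIndependent F (C.mkQ ∘ v)} ≃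
      {w : Fin m → (M ⧸ C) // LinearIndependent F w} × (Fin m → C) :=
    { toFun := fun v => ⟨⟨C.mkQ ∘ v.1, v.2⟩,
        fun i => ⟨v.1 i - g (C.mkQ (v.1 i)),
          hmem _ (by rw [map_sub, hg', sub_self])⟩⟩
      invFun := fun p => ⟨fun i => g (p.1.1 i) + (p.2 i : M), by
        have : C.mkQ ∘ (fun i => g (p.1.1 i) + (p.2 i : M)) = p.1.1 :=
          funext fun i => h1 p.1.1 p.2 i
        rw [this]; exact p.1.2⟩
      left_inv := fun v => by
        apply Subtype.ext; funext i
        show g (C.mkQ (v.1 i)) + (v.1 i - g (C.mkQ (v.1 i))) = v.1 i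
        abel
      right_inv := fun p => by
        refine Prod.ext (Subtype.ext ?_) ?_
        · funext i
          exact h1 p.1.1 p.2 i
        · funext i
          apply Subtype.ext
          show (g (p.1.1 i) + (p.2 i : M)) - g (C.mkQ (g (p.1.1 i) + (p.2 i : M))) = (p.2 i : M)
          rw [h1 p.1.1 p.2 i, add_sub_cancel_left] }
  rw [Nat.card_congr e, Nat.card_prod, mul_comm]
  congr 1
  haveI : Fintype C := Fintype.ofFinite C
  rw [Nat.card_fun]
  rw [Nat.card_eq_fintype_card (α := C), card_eq_pow_finrank (K := F) (V := C),
      Nat.card_eq_fintype_card, Fintype.card_fin]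

lemma card_disjoint (C : Submodule F M) (m : ℕ) :
    Nat.card {U : Submodule F M // finrank F U = m ∧ U ⊓ C = ⊥} *
        ∏ i : Fin m, (q ^ m - q ^ (i : ℕ)) =
      (q ^ finrank F C) ^ m *
        ∏ i : Fin m, (q ^ (finrank F M - finrank F C) - q ^ (i : ℕ)) := by
  classical
  have hq : finrank F (M ⧸ C) = finrank F M - finrank F C := by
    have := Submodule.finrank_quotient_add_finrank C
    omega
  by_cases hm : m ≤ finrank F M - finrank F C
  · rw [← card_tuples, card_lifts]
    congr 1
    haveI : Finite M := Module.finite_of_finite F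
    haveI : Finite (M ⧸ C) := Finite.of_surjective C.mkQ (Submodule.mkQ_surjective C)
    rw [card_linearIndependent (K := F) (V := M ⧸ C) (by rw [hq]; exact hm), hq]
  · -- both sides vanish
    push_neg at hm
    have h0 : Nat.card {U : Submodule F M // finrank F U = m ∧ U ⊓ C = ⊥} = 0 := by
      rw [Nat.card_eq_zero]
      left
      refine ⟨fun U => ?_⟩
      have h1 := Submodule.finrank_sup_add_finrank_inf_eq U.1 C
      have h2 : finrank F (U.1 ⊔ C : Submodule F M) ≤ finrank F M :=
        Submodule.finrank_le _
      rw [U.2.1, U.2.2] at h1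
      have : finrank F (⊥ : Submodule F M) = 0 := finrank_bot F M
      omega
    have h0' : (∏ i : Fin m, (q ^ (finrank F M - finrank F C) - q ^ (i : ℕ))) = 0 := by
      apply Finset.prod_eq_zero (Finset.mem_univ (⟨finrank F M - finrank F C, hm⟩ : Fin m))
      simp
    rw [h0, h0', zero_mul, mul_zero]

lemma card_grass (m : ℕ) (hm : m ≤ finrank F M) :
    Nat.card {U : Submodule F M // finrank F U = m} *
        ∏ i : Fin m, (q ^ m - q ^ (i : ℕ)) =
      ∏ i : Fin m, (q ^ (finrank F M) - q ^ (i : ℕ)) := by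
  classical
  haveI : Finite M := Module.finite_of_finite F
  have e1 : {U : Submodule F M // finrank F U = m ∧ U ⊓ (⊥ : Submodule F M) = ⊥} ≃
      {U : Submodule F M // finrank F U = m} :=
    Equiv.subtypeEquivRight (fun U => by simp)
  have e2 : {v : Fin m → M // LinearIndependent F ((⊥ : Submodule F M).mkQ ∘ v)} ≃
      {v : Fin m → M // LinearIndependent F v} :=
    Equiv.subtypeEquivRight (fun v => by
      constructor
      · exact fun h => h.of_comp _
      · intro h
        exact h.map' _ (by rw [Submodule.ker_mkQ]))
  have := card_tuples (⊥ : Submodule F M) m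
  rw [Nat.card_congr e1, Nat.card_congr e2] at this
  rw [← this, card_linearIndependent (K := F) (V := M) hm]

lemma finrank_map_mkQ (P V : Submodule F M) (h : P ≤ V) :
    finrank F (V.map P.mkQ) + finrank F P = finrank F V := by
  have key := LinearMap.finrank_range_add_finrank_ker (P.mkQ.comp V.subtype)
  have h1 : LinearMap.range (P.mkQ.comp V.subtype) = V.map P.mkQ := by
    rw [LinearMap.range_comp, Submodule.range_subtype]
  have h2 : LinearMap.ker (P.mkQ.comp V.subtype) = P.comap V.subtype := by
    rw [LinearMap.ker_comp, Submodule.ker_mkQ]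
  rw [h1, h2] at key
  rw [← key, (Submodule.comapSubtypeEquivOfLe h).finrank_eq]

lemma step_quotient (X P : Submodule F M) (hPX : P ≤ X) (s : ℕ) :
    Nat.card {V : Submodule F M // finrank F V = s ∧ P ≤ V ∧ V ⊓ X = P} =
      Nat.card {Q : Submodule F (M ⧸ P) //
        finrank F Q + finrank F P = s ∧ Q ⊓ (X.map P.mkQ) = ⊥} := by
  apply Nat.card_congr
  have inf_iff : ∀ V : Submodule F M, P ≤ V →
      (V ⊓ X = P ↔ (V.map P.mkQ) ⊓ (X.map P.mkQ) = ⊥) := by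
    intro V hPV
    constructor
    · intro hVX
      rw [eq_bot_iff]
      intro y hy
      obtain ⟨hy1, hy2⟩ := Submodule.mem_inf.1 hy
      rw [Submodule.mem_map] at hy1 hy2
      obtain ⟨v, hv, rfl⟩ := hy1
      obtain ⟨u, hu, huv⟩ := hy2
      have hvu : v - u ∈ P := by
        rw [← Submodule.ker_mkQ P, LinearMap.mem_ker, map_sub, huv, sub_self]
      have hvX : v ∈ X := by
        have hv' : v = u + (v - u) := by abel
        rw [hv']
        exact X.add_mem hu (hPX hvu)
      have : v ∈ P := hVX ▸ (Submodule.mem_inf.2 ⟨hv, hvX⟩)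
      simpa using (Submodule.Quotient.mk_eq_zero P).2 this
    · intro hQ
      apply le_antisymm
      · intro v hv
        obtain ⟨hv1, hv2⟩ := Submodule.mem_inf.1 hv
        have : P.mkQ v ∈ (V.map P.mkQ) ⊓ (X.map P.mkQ) :=
          ⟨Submodule.mem_map_of_mem hv1, Submodule.mem_map_of_mem hv2⟩
        rw [hQ] at this
        have : P.mkQ v = 0 := this
        rwa [← LinearMap.mem_ker, Submodule.ker_mkQ] at this
      · exact le_inf hPV hPX
  refine
    { toFun := fun V => ⟨V.1.map P.mkQ, ?_, ?_⟩
      invFun := fun Q => ⟨Q.1.comap P.mkQ, ?_, ?_, ?_⟩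
      left_inv := ?_
      right_inv := ?_ }
  · rw [finrank_map_mkQ P V.1 V.2.2.1, V.2.1]
  · exact (inf_iff V.1 V.2.2.1).1 V.2.2.2
  · -- finrank of comap
    have hle : P ≤ Q.1.comap P.mkQ := fun p hp => by
      have : P.mkQ p = 0 := by simpa using (Submodule.Quotient.mk_eq_zero P).2 hp
      simp [Submodule.mem_comap, this]
    have hmapcomap : (Q.1.comap P.mkQ).map P.mkQ = Q.1 := by
      rw [Submodule.map_comap_eq, Submodule.range_mkQ, top_inf_eq]
    have := finrank_map_mkQ P (Q.1.comap P.mkQ) hle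
    rw [hmapcomap] at this
    rw [← this, Q.2.1]
  · intro p hp
    have : P.mkQ p = 0 := by simpa using (Submodule.Quotient.mk_eq_zero P).2 hp
    simp [Submodule.mem_comap, this]
  · -- inf condition
    have hle : P ≤ Q.1.comap P.mkQ := fun p hp => by
      have : P.mkQ p = 0 := by simpa using (Submodule.Quotient.mk_eq_zero P).2 hp
      simp [Submodule.mem_comap, this]
    have hmapcomap : (Q.1.comap P.mkQ).map P.mkQ = Q.1 := by
      rw [Submodule.map_comap_eq, Submodule.range_mkQ, top_inf_eq]
    rw [inf_iff _ hle, hmapcomap]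
    exact Q.2.2
  · rintro ⟨V, h1, h2, h3⟩
    apply Subtype.ext
    show (V.map P.mkQ).comap P.mkQ = V
    rw [Submodule.comap_map_eq, Submodule.ker_mkQ, sup_eq_left.2 h2]
  · rintro ⟨Q, h1, h2⟩
    apply Subtype.ext
    show (Q.comap P.mkQ).map P.mkQ = Q
    rw [Submodule.map_comap_eq, Submodule.range_mkQ, top_inf_eq]

lemma mem_sup_iff_empty (W : Submodule F M) (x : M) (V : Submodule F M) :
    (V : Set M) ∩ {y | y - x ∈ W} = ∅ ↔ x ∉ V ⊔ W := by
  rw [Set.eq_empty_iff_forall_notMem]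
  constructor
  · intro h hxVW
    obtain ⟨v, hv, w, hw, hvw⟩ := Submodule.mem_sup.1 hxVW
    exact h v ⟨hv, by simpa [Set.mem_setOf_eq, ← hvw] using W.neg_mem hw⟩
  · intro h y ⟨hy1, hy2⟩
    exact h (Submodule.mem_sup.2 ⟨y, hy1, x - y, by simpa using W.neg_mem hy2, by abel⟩)

lemma step_cond (W : Submodule F M) (x : M) (hx : x ∉ W) (P : Submodule F M) (hP : P ≤ W)
    (s : ℕ) (V : Submodule F M) :
    ((Module.finrank F V = s ∧ x ∉ V ⊔ W) ∧ V ⊓ W = P) ↔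
      (Module.finrank F V = s ∧ P ≤ V ∧ V ⊓ (W ⊔ span F {x}) = P) := by
  set X := W ⊔ span F {x} with hX
  have hxX : x ∈ X := (le_sup_right : span F {x} ≤ X) (Submodule.mem_span_singleton_self x)
  have hWX : W ≤ X := le_sup_left
  constructor
  · rintro ⟨⟨h1, h2⟩, h3⟩
    refine ⟨h1, h3 ▸ inf_le_left, ?_⟩
    apply le_antisymm
    · intro v hv
      obtain ⟨hv1, hv2⟩ := Submodule.mem_inf.1 hv
      obtain ⟨w, hw, z, hz, hwz⟩ := Submodule.mem_sup.1 hv2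
      obtain ⟨c, rfl⟩ := Submodule.mem_span_singleton.1 hz
      by_cases hc : c = 0
      · subst hc
        simp only [zero_smul, add_zero] at hwz
        exact h3 ▸ Submodule.mem_inf.2 ⟨hv1, hwz ▸ hw⟩
      · exfalso
        apply h2
        have : x = c⁻¹ • v - c⁻¹ • w := by
          rw [← smul_sub]
          have : v - w = c • x := by rw [← hwz]; abel
          rw [this, smul_smul, inv_mul_cancel₀ hc, one_smul]
        rw [this]
        exact Submodule.sub_mem _ ((le_sup_left : V ≤ V ⊔ W) (V.smul_mem _ hv1))
          ((le_sup_right : W ≤ V ⊔ W) (W.smul_mem _ hw))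
    · exact le_inf (h3 ▸ inf_le_left) (le_trans hP hWX)
  · rintro ⟨h1, h2, h3⟩
    have hVW : V ⊓ W = P := by
      apply le_antisymm
      · calc V ⊓ W ≤ V ⊓ X := inf_le_inf_left V hWX
          _ = P := h3
      · exact le_inf h2 hP
    refine ⟨⟨h1, ?_⟩, hVW⟩
    intro hxVW
    obtain ⟨v, hv, w, hw, hvw⟩ := Submodule.mem_sup.1 hxVW
    have hvX : v ∈ X := by
      have : v = x - w := by rw [← hvw]; abel
      rw [this]
      exact X.sub_mem hxX (hWX hw)
    have : v ∈ P := h3 ▸ Submodule.mem_inf.2 ⟨hv, hvX⟩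
    have hvW : v ∈ W := hP this
    exact hx (by rw [← hvw]; exact W.add_mem hvW hw)

end Counting

theorem count_subspaces_disjoint (q k s : ℕ) (hs : 1 ≤ s) (hsk : s ≤ k)
    (F : Type) [Field F] [Fintype F] (hF : Fintype.card F = q)
    (W : Submodule F (Fin k → F)) (hW : Module.finrank F W = k - s)
    (x : Fin k → F) (hx : x ∉ W) :
    (Nat.card {V : Submodule F (Fin k → F) //
        Module.finrank F V = s ∧ (V : Set (Fin k → F)) ∩ {y | y - x ∈ W} = ∅} : ℚ)
      = ∑ i ∈ Finset.Icc 1 s,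
          (q : ℚ) ^ ((s - i) * (k - i - s + 1)) * qbin q (s - 1) (i - 1) * qbin q (k - s) i := by
  classical
  subst hF
  set Q := Fintype.card F with hQ
  have hq2 : 2 ≤ Q := Fintype.one_lt_card
  haveI : Finite (Fin k → F) := Module.finite_of_finite F
  haveI : Finite (Submodule F (Fin k → F)) :=
    Finite.of_injective (fun U : Submodule F (Fin k → F) => (U : Set (Fin k → F))) fun U V h => SetLike.ext' h
  have hk : finrank F (Fin k → F) = k := by
    rw [Module.finrank_fintype_fun_eq_card, Fintype.card_fin]
  have hx0 : x ≠ 0 := fun h => hx (h ▸ W.zero_mem)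
  set X : Submodule F (Fin k → F) := W ⊔ span F {x} with hXdef
  have hWX : W ≤ X := le_sup_left
  have hfX : finrank F X = k - s + 1 := by
    have hdisj : W ⊓ span F {x} = ⊥ :=
      disjoint_iff.1 (Submodule.disjoint_span_singleton.2 (fun h => absurd h hx))
    have h2 := Submodule.finrank_sup_add_finrank_inf_eq W (span F {x})
    have h3 : finrank F (⊥ : Submodule F (Fin k → F)) = 0 := finrank_bot F _
    rw [hdisj, hW, finrank_span_singleton hx0, h3] at h2
    rw [hXdef]
    omega
  -- Step 1 : rewrite the set condition
  have step1 : Nat.card {V : Submodule F (Fin k → F) //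
      finrank F V = s ∧ (V : Set (Fin k → F)) ∩ {y | y - x ∈ W} = ∅} =
      Nat.card {V : Submodule F (Fin k → F) // finrank F V = s ∧ x ∉ V ⊔ W} :=
    Nat.card_congr (Equiv.subtypeEquivRight fun V =>
      and_congr_right fun _ => mem_sup_iff_empty W x V)
  -- the fiber count function
  set c : ℕ → ℚ := fun i => if i ≤ s then
      (Q : ℚ) ^ ((k - s + 1 - i) * (s - i)) * qbin Q (s - 1) (s - i) else 0 with hc
  -- Step 2 : count each fiber
  have fiber_card : ∀ P : Submodule F (Fin k → F), P ≤ W →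
      (Nat.card {V : Submodule F (Fin k → F) //
        (finrank F V = s ∧ x ∉ V ⊔ W) ∧ V ⊓ W = P} : ℚ) = c (finrank F P) := by
    intro P hP
    have hPX : P ≤ X := le_trans hP hWX
    have hiW : finrank F P ≤ k - s := hW ▸ Submodule.finrank_mono hP
    set i := finrank F P with hi
    have e1 : Nat.card {V : Submodule F (Fin k → F) //
        (finrank F V = s ∧ x ∉ V ⊔ W) ∧ V ⊓ W = P} =
        Nat.card {V : Submodule F (Fin k → F) // finrank F V = s ∧ P ≤ V ∧ V ⊓ X = P} :=
      Nat.card_congr (Equiv.subtypeEquivRight fun V => step_cond W x hx P hP s V)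
    rw [e1, step_quotient X P hPX s]
    -- dimension bookkeeping in the quotient
    have hfQuot : finrank F ((Fin k → F) ⧸ P) = k - i := by
      have := Submodule.finrank_quotient_add_finrank P
      omega
    have hfC : finrank F (X.map P.mkQ) = k - s + 1 - i := by
      have := finrank_map_mkQ P X hPX
      omega
    by_cases his : i ≤ s
    · have e2 : Nat.card {Q' : Submodule F ((Fin k → F) ⧸ P) //
          finrank F Q' + finrank F P = s ∧ Q' ⊓ (X.map P.mkQ) = ⊥} =
          Nat.card {Q' : Submodule F ((Fin k → F) ⧸ P) //
          finrank F Q' = s - i ∧ Q' ⊓ (X.map P.mkQ) = ⊥} :=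
        Nat.card_congr (Equiv.subtypeEquivRight fun Q' =>
          and_congr_left fun _ => by omega)
      rw [e2]
      have key := card_disjoint (F := F) (X.map P.mkQ) (s - i)
      rw [hfC, hfQuot] at key
      have hcast := congrArg (fun t : ℕ => (t : ℚ)) key
      simp only [Nat.cast_mul, Nat.cast_pow] at hcast
      rw [cast_prod_fin (by omega) (s - i) (s - i) (by omega)] at hcast
      have hki : k - i - (k - s + 1 - i) = s - 1 := by omega
      rw [hki] at hcast
      rw [cast_prod_fin (by omega) (s - 1) (s - i) (by omega)] at hcast
      have hA := A_ne_zero (q := Q) hq2 (s - i)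
      rw [← hQ] at hcast
      have hval : (Nat.card {Q' : Submodule F ((Fin k → F) ⧸ P) //
          finrank F Q' = s - i ∧ Q' ⊓ (X.map P.mkQ) = ⊥} : ℚ) =
          ((Q : ℚ) ^ (k - s + 1 - i)) ^ (s - i) *
            ((∏ j ∈ Finset.range (s - i), ((Q : ℚ) ^ (s - 1) - (Q : ℚ) ^ j)) /
             (∏ j ∈ Finset.range (s - i), ((Q : ℚ) ^ (s - i) - (Q : ℚ) ^ j))) := by
        rw [← mul_div_assoc, eq_div_iff hA]
        exact hcast
      rw [hval, qb'_eq_qbin hq2 (s - 1) (s - i), hc]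
      simp only [his, if_true, ← pow_mul]
    · push_neg at his
      have : IsEmpty {Q' : Submodule F ((Fin k → F) ⧸ P) //
          finrank F Q' + finrank F P = s ∧ Q' ⊓ (X.map P.mkQ) = ⊥} :=
        ⟨fun Q' => by have := Q'.2.1; omega⟩
      rw [Nat.card_eq_zero.2 (Or.inl this), hc]
      simp [Nat.cast_zero, if_neg (by omega : ¬ i ≤ s)]
  -- Step 3 : fiber the whole set over P = V ⊓ W
  rw [step1]
  set T := {V : Submodule F (Fin k → F) // finrank F V = s ∧ x ∉ V ⊔ W} with hT
  haveI : Fintype T := Fintype.ofFinite _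
  set B := {P : Submodule F (Fin k → F) // P ≤ W} with hB
  haveI : Fintype B := Fintype.ofFinite _
  let f : T → B := fun V => ⟨V.1 ⊓ W, inf_le_right⟩
  haveI : ∀ P : B, Fintype {V : T // f V = P} := fun P => Fintype.ofFinite _
  have hsigma : (Nat.card T : ℚ) = ∑ P : B, (Nat.card {V : T // f V = P} : ℚ) := by
    rw [← Nat.card_congr (Equiv.sigmaFiberEquiv f), Nat.card_eq_fintype_card,
      Fintype.card_sigma]
    push_cast
    exact Finset.sum_congr rfl fun P _ => by rw [Nat.card_eq_fintype_card]
  have hfiber_flat : ∀ P : B, Nat.card {V : T // f V = P} =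
      Nat.card {V : Submodule F (Fin k → F) //
        (finrank F V = s ∧ x ∉ V ⊔ W) ∧ V ⊓ W = P.1} := by
    intro P
    apply Nat.card_congr
    exact
      { toFun := fun a => ⟨a.1.1, a.1.2, congrArg Subtype.val a.2⟩
        invFun := fun V => ⟨⟨V.1, V.2.1⟩, Subtype.ext V.2.2⟩
        left_inv := fun a => Subtype.ext (Subtype.ext rfl)
        right_inv := fun V => rfl }
  have htotal : (Nat.card T : ℚ) = ∑ P : B, c (finrank F P.1) := by
    rw [hsigma]
    exact Finset.sum_congr rfl fun P _ => by
      rw [hfiber_flat P, fiber_card P.1 P.2]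
  -- Step 4 : group the sum by the dimension of P
  have hgroup : ∑ P : B, c (finrank F P.1) =
      ∑ i ∈ Finset.range (k - s + 1),
        (Nat.card {P : B // finrank F P.1 = i} : ℚ) * c i := by
    rw [← Finset.sum_fiberwise_of_maps_to (g := fun P : B => finrank F P.1)
      (t := Finset.range (k - s + 1))
      (fun P _ => Finset.mem_range.2
        (Nat.lt_succ_of_le (hW ▸ Submodule.finrank_mono P.2)))
      (fun P => c (finrank F P.1))]
    apply Finset.sum_congr rfl
    intro i _
    have : ∀ P ∈ Finset.univ.filter (fun P : B => finrank F P.1 = i),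
        c (finrank F P.1) = c i := fun P hP => by
      rw [(Finset.mem_filter.1 hP).2]
    rw [Finset.sum_congr rfl this, Finset.sum_const, nsmul_eq_mul]
    congr 1
    rw [Nat.card_eq_fintype_card, Fintype.card_subtype]
  -- Step 5 : identify the number of i-dimensional subspaces of W
  have hG : ∀ i : ℕ, i ≤ k - s →
      (Nat.card {P : B // finrank F P.1 = i} : ℚ) = qbin Q (k - s) i := by
    intro i hikW
    have e0 : {Q' : Submodule F W // finrank F Q' = i} ≃ {P : B // finrank F P.1 = i} :=
      Equiv.subtypeEquiv (Submodule.MapSubtype.orderIso W).toEquiv (fun Q' => by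
        constructor
        · intro h
          show finrank F (Q'.map W.subtype) = i
          rw [Submodule.finrank_map_subtype_eq]; exact h
        · intro h
          have : finrank F (Q'.map W.subtype) = i := h
          rwa [Submodule.finrank_map_subtype_eq] at this)
    rw [← Nat.card_congr e0]
    have key := card_grass (F := F) (M := W) i (by rw [hW]; exact hikW)
    have hcast := congrArg (fun t : ℕ => (t : ℚ)) key
    simp only [Nat.cast_mul] at hcast
    rw [hW] at hcast
    rw [cast_prod_fin (by omega) i i (by omega),
      cast_prod_fin (by omega) (k - s) i (by omega), ← hQ] at hcast
    rw [← qb'_eq_qbin hq2 (k - s) i, eq_div_iff (A_ne_zero hq2 i)]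
    exact hcast
  rw [htotal, hgroup]
  -- Step 6 : final algebraic bookkeeping
  have hsum1 : ∑ i ∈ Finset.range (k - s + 1),
      (Nat.card {P : B // finrank F P.1 = i} : ℚ) * c i =
      ∑ i ∈ Finset.range (k - s + 1), qbin Q (k - s) i * c i :=
    Finset.sum_congr rfl fun i hi => by
      rw [hG i (by have := Finset.mem_range.1 hi; omega)]
  rw [hsum1]
  have hc0 : c 0 = 0 := by
    rw [hc]
    simp only [Nat.sub_zero, if_pos (Nat.zero_le s)]
    rw [qbin_zero_of_lt (by omega : s - 1 < s), mul_zero]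
  have hstep1 : ∑ i ∈ Finset.range (k - s + 1), qbin Q (k - s) i * c i =
      ∑ i ∈ Finset.Icc 1 (k - s), qbin Q (k - s) i * c i :=
    (Finset.sum_subset (fun i hi => Finset.mem_range.2 (by
        have := Finset.mem_Icc.1 hi; omega))
      (fun i hi hni => by
        have h1 := Finset.mem_range.1 hi
        have h0 : i = 0 := by
          by_contra h
          exact hni (Finset.mem_Icc.2 (by omega))
        rw [h0, hc0, mul_zero])).symm
  have hstep2 : ∑ i ∈ Finset.Icc 1 (k - s), qbin Q (k - s) i * c i =
      ∑ i ∈ Finset.Icc 1 k, qbin Q (k - s) i * c i := by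
    apply Finset.sum_subset (Finset.Icc_subset_Icc_right (by omega))
    intro i hi hni
    have h1 := Finset.mem_Icc.1 hi
    have : k - s < i := by
      by_contra h
      exact hni (Finset.mem_Icc.2 (by omega))
    rw [qbin_zero_of_lt this, zero_mul]
  have hstep3 : ∑ i ∈ Finset.Icc 1 s,
      (Q : ℚ) ^ ((s - i) * (k - i - s + 1)) * qbin Q (s - 1) (i - 1) * qbin Q (k - s) i =
      ∑ i ∈ Finset.Icc 1 k,
      (Q : ℚ) ^ ((s - i) * (k - i - s + 1)) * qbin Q (s - 1) (i - 1) * qbin Q (k - s) i := by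
    apply Finset.sum_subset (Finset.Icc_subset_Icc_right hsk)
    intro i hi hni
    have h1 := Finset.mem_Icc.1 hi
    have his : s < i := by
      by_contra h
      exact hni (Finset.mem_Icc.2 (by omega))
    rw [qbin_zero_of_lt (by omega : s - 1 < i - 1), mul_zero, zero_mul]
  rw [hstep1, hstep2, hstep3]
  apply Finset.sum_congr rfl
  intro i hi
  obtain ⟨hi1, hik⟩ := Finset.mem_Icc.1 hi
  by_cases his : i ≤ s
  · have hcval : c i = (Q : ℚ) ^ ((k - s + 1 - i) * (s - i)) * qbin Q (s - 1) (s - i) := by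
      rw [hc]; simp only [if_pos his]
    by_cases hik2 : i ≤ k - s
    · have hsym : qbin Q (s - 1) (s - i) = qbin Q (s - 1) (i - 1) := by
        rw [qbin_symm hq2 (by omega : s - i ≤ s - 1)]
        congr 1
        omega
      have hexp : (k - s + 1 - i) * (s - i) = (s - i) * (k - i - s + 1) := by
        rw [show k - s + 1 - i = k - i - s + 1 by omega, Nat.mul_comm]
      rw [hcval, hsym, hexp]
      ring
    · rw [qbin_zero_of_lt (by omega : k - s < i), zero_mul, mul_zero]
  · have hcval : c i = 0 := by rw [hc]; simp only [if_neg his]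
    rw [hcval, mul_zero, qbin_zero_of_lt (by omega : s - 1 < i - 1), mul_zero, zero_mul]
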